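/- arXiv:2602.18997 — 2 statements merged into one kernel-verified Lean document; each statement's English description precedes it below -/
import Mathlib

section
/- Under the mirror descent update ∇ψ(W_i) = ∇ψ(W_{i−1}) − η∇ℒ(W_{i−1}), if W interpolates (ℒ(W) = 0 and ℒ is nonnegative), ℒ is convex, and ψ − ηℒ is convex, then D_ψ(W, W_i) ≤ D_ψ(W, W_{i−1}). -/
open scoped RealInnerProductSpace

noncomputable def breg {E : Type*} [NormedAddCommGroup E] [InnerProductSpace ℝ E]
    [CompleteSpace E] (f : E → ℝ) (U V : E) : ℝ :=
  f U - f V - ⟪gradient f V, U - V⟫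

/-- First-order condition: for a differentiable convex function,
`⟪∇f x, y - x⟫ ≤ f y - f x`. -/
lemma grad_inner_le_of_convex {E : Type*} [NormedAddCommGroup E] [InnerProductSpace ℝ E]
    [CompleteSpace E] {f : E → ℝ} (hf : Differentiable ℝ f)
    (hc : ConvexOn ℝ Set.univ f) (x y : E) :
    ⟪gradient f x, y - x⟫ ≤ f y - f x := by
  set g : ℝ → ℝ := fun t => f (AffineMap.lineMap x y t) with hg
  have hgc : ConvexOn ℝ Set.univ g := by
    have := hc.comp_affineMap (AffineMap.lineMap x y : ℝ →ᵃ[ℝ] E)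
    simpa [Set.preimage_univ, hg, Function.comp_def] using this
  have hline : HasDerivAt (fun t : ℝ => AffineMap.lineMap x y t) (y - x) 0 := by
    simp only [AffineMap.lineMap_apply_module']
    have : HasDerivAt (fun t : ℝ => t • (y - x) + x) ((1 : ℝ) • (y - x)) 0 :=
      ((hasDerivAt_id (0 : ℝ)).smul_const (y - x)).add_const x
    simpa using this
  have hfx : HasFDerivAt f (InnerProductSpace.toDual ℝ E (gradient f x)) x :=
    (hf x).hasGradientAt.hasFDerivAt
  have hgd : HasDerivAt g ⟪gradient f x, y - x⟫ 0 := by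
    have hx0 : (AffineMap.lineMap x y : ℝ → E) 0 = x := by simp
    have := (hx0 ▸ hfx).comp_hasDerivAt 0 hline
    simpa [InnerProductSpace.toDual_apply_apply, hg, Function.comp_def] using this
  have hslope := hgc.le_slope_of_hasDerivAt (Set.mem_univ (0 : ℝ))
    (Set.mem_univ (1 : ℝ)) one_pos hgd
  have : slope g 0 1 = f y - f x := by
    simp [slope, hg]
  linarith [hslope, this.le, this.ge]

/-- One mirror descent step does not increase the Bregman divergence to an interpolator. -/
theorem smd_step_decreases {d k : ℕ}
    (ψ L : EuclideanSpace ℝ (Fin d × Fin k) → ℝ)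
    (hψ : Differentiable ℝ ψ) (hL : Differentiable ℝ L)
    (η : ℝ) (hη : 0 < η)
    (hLconv : ConvexOn ℝ Set.univ L)
    (hcomb : ConvexOn ℝ Set.univ (fun X => ψ X - η * L X))
    (Wprev Wcur W : EuclideanSpace ℝ (Fin d × Fin k))
    (hstep : gradient ψ Wcur = gradient ψ Wprev - η • gradient L Wprev)
    (hWzero : L W = 0) (hLnonneg : ∀ V, 0 ≤ L V) :
    breg ψ W Wcur ≤ breg ψ W Wprev := by
  set φ : EuclideanSpace ℝ (Fin d × Fin k) → ℝ := fun X => ψ X - η * L X with hφ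
  set gp := gradient ψ Wprev with hgp
  set gL := gradient L Wprev with hgL
  have hφdiff : Differentiable ℝ φ := fun x =>
    ((hψ x).sub (((hL x).const_mul η)))
  -- gradient of φ at Wprev
  have hφgrad : gradient φ Wprev = gp - η • gL := by
    have hfd : HasFDerivAt φ (InnerProductSpace.toDual ℝ _ (gp - η • gL)) Wprev := by
      have h1 : HasFDerivAt ψ (InnerProductSpace.toDual ℝ _ gp) Wprev :=
        (hψ Wprev).hasGradientAt.hasFDerivAt
      have h2 : HasFDerivAt L (InnerProductSpace.toDual ℝ _ gL) Wprev :=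
        (hL Wprev).hasGradientAt.hasFDerivAt
      have h3 : HasFDerivAt (fun X => η * L X)
          (η • InnerProductSpace.toDual ℝ _ gL) Wprev := by
        simpa [Pi.smul_def, smul_eq_mul] using h2.const_smul η
      have := h1.sub h3
      simpa [map_sub, map_smul, hφ, Pi.sub_def] using this
    exact (hasGradientAt_iff_hasFDerivAt.mpr hfd).gradient
  have h1 := grad_inner_le_of_convex hφdiff hcomb Wprev Wcur
  rw [hφgrad] at h1
  have h2 := grad_inner_le_of_convex hL hLconv Wprev W
  rw [← hgL] at h2
  rw [hWzero] at h2
  have h2' : η * ⟪gL, W - Wprev⟫ ≤ η * (0 - L Wprev) :=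
    mul_le_mul_of_nonneg_left h2 hη.le
  have h3 : 0 ≤ η * L Wcur := mul_nonneg hη.le (hLnonneg Wcur)
  simp only [breg, hstep, ← hgp, ← hgL, hφ] at *
  simp only [inner_sub_left, inner_sub_right, real_inner_smul_left] at *
  linarith
end

section
/- Under the mirror descent update ∇ψ(W_i) = ∇ψ(W_{i−1}) − η∇ℒ_i(W_{i−1}) for i = 1,…,T, where each ℒ_i is convex nonnegative with ℒ_i(W) = 0 for a fixed interpolating W, and each ψ − ηℒ_i is convex, we have D_ψ(W, W_0) ≥ D_ψ(W, W_T) + η·Σ_{i=1}^T ℒ_i(W_i). In particular Σ_{i=1}^T ℒ_i(W_i) ≤ D_ψ(W, W_0)/η for all T, so ℒ_i(W_i) → 0. -/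
open scoped RealInnerProductSpace

lemma inner_gradient_eq {E : Type*} [NormedAddCommGroup E] [InnerProductSpace ℝ E]
    [CompleteSpace E] (f : E → ℝ) (x v : E) :
    ⟪gradient f x, v⟫ = fderiv ℝ f x v := by
  rw [gradient, InnerProductSpace.toDual_symm_apply]

/-- Gradient inequality for a convex differentiable function. -/
lemma convexOn_fderiv_le {E : Type*} [NormedAddCommGroup E] [InnerProductSpace ℝ E]
    {f : E → ℝ} (hconv : ConvexOn ℝ Set.univ f) {x : E} (hdiff : DifferentiableAt ℝ f x)
    (y : E) : f x + fderiv ℝ f x (y - x) ≤ f y := by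
  rcases eq_or_ne y x with rfl | hne
  · simp
  · set g : ℝ → ℝ := fun t => f (x + t • (y - x)) with hg
    have hgc : ConvexOn ℝ Set.univ g := by
      have h := hconv.comp_affineMap (AffineMap.lineMap x y : ℝ →ᵃ[ℝ] E)
      simp only [Set.preimage_univ] at h
      suffices heq : g = f ∘ (AffineMap.lineMap x y : ℝ →ᵃ[ℝ] E) by rw [heq]; exact h
      funext t
      simp only [Function.comp_apply, AffineMap.lineMap_apply_module, hg]
      congr 1
      module
    have hline : HasDerivAt (fun t : ℝ => x + t • (y - x)) (y - x) 0 := by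
      simpa using ((hasDerivAt_id (0:ℝ)).smul_const (y - x)).const_add x
    have hgd : HasDerivAt g (fderiv ℝ f x (y - x)) 0 := by
      have hfd' : HasFDerivAt f (fderiv ℝ f x) (x + (0:ℝ) • (y - x)) := by
        simpa using hdiff.hasFDerivAt
      have := hfd'.comp_hasDerivAt 0 hline
      simpa [hg, Function.comp_def] using this
    have hslope := hgc.le_slope_of_hasDerivAt (Set.mem_univ 0) (Set.mem_univ 1)
      one_pos hgd
    have : fderiv ℝ f x (y - x) ≤ g 1 - g 0 := by
      simpa [slope_def_field] using hslope
    have hg0 : g 0 = f x := by simp [hg]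
    have hg1 : g 1 = f y := by simp [hg]
    rw [hg0, hg1] at this
    linarith

/-- Telescoped mirror descent inequality and convergence of the losses to zero. -/
theorem smd_telescoped {d k : ℕ}
    (ψ : EuclideanSpace ℝ (Fin d × Fin k) → ℝ)
    (L : ℕ → EuclideanSpace ℝ (Fin d × Fin k) → ℝ)
    (hψ : Differentiable ℝ ψ) (hL : ∀ i, Differentiable ℝ (L i))
    (hLconv : ∀ i, ConvexOn ℝ Set.univ (L i))
    (hLnonneg : ∀ i V, 0 ≤ L i V)
    (η : ℝ) (hη : 0 < η)
    (hcomb : ∀ i, ConvexOn ℝ Set.univ (fun X => ψ X - η * L i X))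
    (Wseq : ℕ → EuclideanSpace ℝ (Fin d × Fin k))
    (hstep : ∀ i : ℕ,
      gradient ψ (Wseq (i + 1)) =
        gradient ψ (Wseq i) - η • gradient (L (i + 1)) (Wseq i))
    (W : EuclideanSpace ℝ (Fin d × Fin k))
    (hWzero : ∀ i, L i W = 0) :
    (∀ T : ℕ,
      breg ψ W (Wseq 0) ≥
        breg ψ W (Wseq T) + η * ∑ i ∈ Finset.range T, L (i + 1) (Wseq (i + 1))) ∧
    Filter.Tendsto (fun i => L (i + 1) (Wseq (i + 1))) Filter.atTop (nhds 0) := by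
  -- ψ is convex, being (ψ - η L 0) + η • (L 0)
  have hψconv : ConvexOn ℝ Set.univ ψ := by
    have h1 := (hcomb 0).add ((hLconv 0).smul hη.le)
    have heq : ((fun X => ψ X - η * L 0 X) + fun X => η • L 0 X) = ψ := by
      funext X; simp [smul_eq_mul]
    rwa [heq] at h1
  -- Bregman divergence of ψ is nonnegative
  have hbreg_nonneg : ∀ V, 0 ≤ breg ψ W V := by
    intro V
    have := convexOn_fderiv_le hψconv ((hψ V).restrictScalars ℝ) W
    rw [breg, inner_gradient_eq]
    linarith
  -- key per-step inequality
  have hkey : ∀ i : ℕ,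
      breg ψ W (Wseq (i + 1)) + η * L (i + 1) (Wseq (i + 1)) ≤ breg ψ W (Wseq i) := by
    intro i
    set Vi := Wseq i
    set V' := Wseq (i + 1)
    set g := gradient (L (i + 1)) Vi with hgdef
    -- fderiv of the combined function
    have hfd : ∀ v, fderiv ℝ (fun X => ψ X - η * L (i+1) X) Vi v
        = ⟪gradient ψ Vi, v⟫ - η * ⟪g, v⟫ := by
      intro v
      have h1 : HasFDerivAt (fun X => ψ X - η * L (i+1) X)
          (fderiv ℝ ψ Vi - η • fderiv ℝ (L (i+1)) Vi) Vi := by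
        have := ((hψ Vi).hasFDerivAt.sub
          (((hL (i+1)) Vi).hasFDerivAt.const_smul η))
        exact this
      rw [h1.fderiv, inner_gradient_eq, hgdef, inner_gradient_eq]
      simp [smul_eq_mul]
    -- convexity of combined function: at Vi evaluated at V'
    have hcombdiff : DifferentiableAt ℝ (fun X => ψ X - η * L (i+1) X) Vi :=
      (hψ Vi).sub (((hL (i+1)) Vi).const_mul η)
    have h2 := convexOn_fderiv_le (hcomb (i+1)) hcombdiff V'
    rw [hfd] at h2
    -- convexity of L at Vi evaluated at W
    have h3 := convexOn_fderiv_le (hLconv (i+1)) ((hL (i+1)) Vi) W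
    rw [← inner_gradient_eq, ← hgdef] at h3
    rw [hWzero (i+1)] at h3
    -- expand the step rule
    have hstep' : ⟪gradient ψ V', W - V'⟫
        = ⟪gradient ψ Vi, W - V'⟫ - η * ⟪g, W - V'⟫ := by
      rw [hstep i, inner_sub_left, real_inner_smul_left]
    -- inner product decompositions
    have hdec1 : ⟪gradient ψ Vi, W - Vi⟫
        = ⟪gradient ψ Vi, W - V'⟫ + ⟪gradient ψ Vi, V' - Vi⟫ := by
      rw [← inner_add_right, sub_add_sub_cancel]
    have hdec2 : ⟪g, W - Vi⟫ = ⟪g, W - V'⟫ + ⟪g, V' - Vi⟫ := by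
      rw [← inner_add_right, sub_add_sub_cancel]
    have hLnn := hLnonneg (i+1) Vi
    simp only [breg]
    rw [hstep']
    nlinarith [h2, h3, hdec1, hdec2]
  obtain ⟨htel⟩ : (∀ T : ℕ,
      breg ψ W (Wseq 0) ≥
        breg ψ W (Wseq T) + η * ∑ i ∈ Finset.range T, L (i + 1) (Wseq (i + 1))) ∧ True := by
    constructor
    · intro T
      induction T with
      | zero => simp
      | succ n ih =>
        rw [Finset.sum_range_succ]
        have := hkey n
        nlinarith
    · trivial
  refine ⟨htel, ?_⟩
  have hsummable : Summable (fun i => L (i + 1) (Wseq (i + 1))) := by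
    apply summable_of_sum_range_le (c := breg ψ W (Wseq 0) / η)
      (fun n => hLnonneg _ _)
    intro n
    have h1 := htel n
    have h2 := hbreg_nonneg (Wseq n)
    rw [le_div_iff₀ hη]
    nlinarith [htel n, hbreg_nonneg (Wseq n)]
  exact hsummable.tendsto_atTop_zero
end
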